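/- For n ≥ 2, the zero forcing polynomial of the complete graph K_n is Z(K_n; x) = x^n + n·x^{n-1}. -/
import Mathlib


/-- The set of vertices eventually colored ("forced") by the zero forcing process
starting from the initially colored set `S`: a colored vertex with exactly one
uncolored neighbor forces that neighbor to become colored. -/
inductive SimpleGraph.Forced {V : Type*} (G : SimpleGraph V) (S : Set V) : V → Prop
  | mem {v : V} : v ∈ S → G.Forced S v
  | force {u v : V} : G.Adj u v → G.Forced S u →
      (∀ w, G.Adj u w → w ≠ v → G.Forced S w) → G.Forced S v

/-- `S` is a zero forcing set of `G` if the zero forcing process starting from `S`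
colors every vertex. -/
def SimpleGraph.IsZeroForcingSet {V : Type*} (G : SimpleGraph V) (S : Set V) : Prop :=
  ∀ v, G.Forced S v

/-- `z(G;i)`: the number of zero forcing sets of `G` of size `i`. -/
noncomputable def SimpleGraph.zcount {V : Type*} [Fintype V] (G : SimpleGraph V) (i : ℕ) : ℕ :=
  Nat.card {S : Finset V // S.card = i ∧ G.IsZeroForcingSet ↑S}

/-- `Z(G)`: the zero forcing number, the minimum size of a zero forcing set. -/
noncomputable def SimpleGraph.zfNumber {V : Type*} [Fintype V] (G : SimpleGraph V) : ℕ :=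
  sInf {i | ∃ S : Finset V, S.card = i ∧ G.IsZeroForcingSet ↑S}

/-- The zero forcing polynomial `𝒵(G;x) = ∑_{i=1}^n z(G;i) x^i`. -/
noncomputable def SimpleGraph.zfPoly {V : Type*} [Fintype V] (G : SimpleGraph V) : Polynomial ℤ :=
  ∑ i ∈ Finset.Icc 1 (Fintype.card V), Polynomial.C (G.zcount i : ℤ) * Polynomial.X ^ i

/-- The path `P_n` on `n` vertices. -/
def pathG (n : ℕ) : SimpleGraph (Fin n) :=
  SimpleGraph.fromRel (fun i j => (i : ℕ) + 1 = j)

/-- The cycle `C_n` on `n` vertices. -/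
def cycleG (n : ℕ) : SimpleGraph (Fin n) :=
  SimpleGraph.fromRel (fun i j => ((i : ℕ) + 1) % n = j)

lemma top_forced_mem {n : ℕ} (S : Finset (Fin n)) (h2 : 2 ≤ Sᶜ.card) :
    ∀ v, (⊤ : SimpleGraph (Fin n)).Forced ↑S v → v ∈ S := by
  obtain ⟨v1, hv1, v2, hv2, hne⟩ := Finset.one_lt_card.mp h2
  intro v hv
  induction hv with
  | mem h => exact h
  | @force u v hadj hu hall ihu ihall =>
    exfalso
    have hw : ∃ w, w ∈ Sᶜ ∧ w ≠ v := by
      rcases eq_or_ne v1 v with rfl | h1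
      · exact ⟨v2, hv2, hne.symm⟩
      · exact ⟨v1, hv1, h1⟩
    obtain ⟨w, hwc, hwv⟩ := hw
    have hwu : u ≠ w := fun h => (Finset.mem_compl.mp hwc) (h ▸ ihu)
    exact (Finset.mem_compl.mp hwc) (ihall w (by simp [hwu]) hwv)

lemma top_zfs_iff {n : ℕ} (hn : 2 ≤ n) (S : Finset (Fin n)) :
    (⊤ : SimpleGraph (Fin n)).IsZeroForcingSet ↑S ↔ n - 1 ≤ S.card := by
  have hcompl : Sᶜ.card = n - S.card := by
    have := Finset.card_compl S
    simp only [Fintype.card_fin] at this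
    omega
  have hSle : S.card ≤ n := by
    simpa [Fintype.card_fin] using Finset.card_le_univ S
  constructor
  · intro h
    by_contra hc
    push_neg at hc
    have h2 : 2 ≤ Sᶜ.card := by omega
    obtain ⟨v1, hv1, _⟩ := Finset.one_lt_card.mp h2
    exact (Finset.mem_compl.mp hv1) (top_forced_mem S h2 v1 (h v1))
  · intro hcard v
    by_cases hv : v ∈ S
    · exact SimpleGraph.Forced.mem (by simpa)
    · have h1 : Sᶜ.card ≤ 1 := by omega
      have hall : ∀ w : Fin n, w ≠ v → w ∈ S := by
        intro w hwv
        by_contra hw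
        exact hwv (Finset.card_le_one.mp h1 w (Finset.mem_compl.mpr hw) v
          (Finset.mem_compl.mpr hv))
      have hSne : S.Nonempty := Finset.card_pos.mp (by omega)
      obtain ⟨u, hu⟩ := hSne
      have huv : u ≠ v := fun h => hv (h ▸ hu)
      exact SimpleGraph.Forced.force (u := u) (v := v) (by simp [huv])
        (SimpleGraph.Forced.mem (by simpa))
        (fun w _ hwv => SimpleGraph.Forced.mem (by simpa using hall w hwv))

lemma top_zcount {n : ℕ} (hn : 2 ≤ n) (i : ℕ) :
    (⊤ : SimpleGraph (Fin n)).zcount i =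
      if i = n then 1 else if i = n - 1 then n else 0 := by
  unfold SimpleGraph.zcount
  split_ifs with h1 h2
  · subst h1
    rw [Nat.card_eq_one_iff_unique]
    constructor
    · constructor
      intro ⟨S, hS, _⟩ ⟨T, hT, _⟩
      have : S = T := by
        have hS' : S = Finset.univ := Finset.eq_univ_of_card S (by simp [hS])
        have hT' : T = Finset.univ := Finset.eq_univ_of_card T (by simp [hT])
        rw [hS', hT']
      simpa using this
    · refine ⟨⟨Finset.univ, by simp, ?_⟩⟩
      rw [top_zfs_iff hn]
      simp
  · subst h2
    have : ∀ S : Finset (Fin n), (S.card = n - 1 ∧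
        (⊤ : SimpleGraph (Fin n)).IsZeroForcingSet ↑S) ↔ S.card = n - 1 := by
      intro S
      constructor
      · exact fun h => h.1
      · intro h
        exact ⟨h, (top_zfs_iff hn S).mpr (le_of_eq h.symm)⟩
    rw [Nat.card_congr (Equiv.subtypeEquivRight this), Nat.card_eq_fintype_card,
      Fintype.card_finset_len, Fintype.card_fin, Nat.choose_symm (by omega)]
    simp [Nat.choose_one_right, Nat.sub_sub_self (by omega : 1 ≤ n)]
  · rw [Nat.card_eq_zero]
    left
    constructor
    intro ⟨S, hS, hzfs⟩
    have := (top_zfs_iff hn S).mp hzfs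
    have hSle : S.card ≤ n := by
      simpa [Fintype.card_fin] using Finset.card_le_univ S
    omega

/-- For `n ≥ 2`, `𝒵(K_n;x) = x^n + n x^{n-1}`. -/
theorem zfPoly_completeGraph (n : ℕ) (hn : 2 ≤ n) :
    (⊤ : SimpleGraph (Fin n)).zfPoly =
      Polynomial.X ^ n + Polynomial.C (n : ℤ) * Polynomial.X ^ (n - 1) := by
  unfold SimpleGraph.zfPoly
  rw [Fintype.card_fin]
  have hsub : ({n - 1, n} : Finset ℕ) ⊆ Finset.Icc 1 n := by
    intro i hi
    simp only [Finset.mem_insert, Finset.mem_singleton] at hi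
    rcases hi with rfl | rfl <;> simp [Finset.mem_Icc] <;> omega
  rw [← Finset.sum_subset hsub]
  · rw [Finset.sum_pair (by omega : n - 1 ≠ n)]
    rw [top_zcount hn, top_zcount hn, if_neg (by omega : ¬ n - 1 = n), if_pos rfl, if_pos rfl]
    push_cast
    rw [Polynomial.C_1]
    ring
  · intro i hi hni
    simp only [Finset.mem_insert, Finset.mem_singleton, not_or] at hni
    rw [top_zcount hn, if_neg hni.2, if_neg hni.1]
    simp
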